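/- Let L₁, L₂, L₃, Q₋₁, Q₀ be arbitrary vectors in ℂ⁴ and set W(z) = Σ_{k=1}^{3} L_k/(z − z_k) + Q₋₁·z + Q₀. Then W satisfies W'(z) = −A(z)·W(z) for all z ∈ ℂ ∖ {z₁, z₂, z₃} if and only if the following three conditions hold: (i) (I − P_k)L_k = 0 for k = 1, 2, 3; (ii) Σ_{j ≠ k} (P_k L_j + P_j L_k)/(z_k − z_j) + P_k·(Q₋₁·z_k + Q₀) = 0 for k = 1, 2, 3; (iii) Q₋₁ = −T·Q₋₁, where T = P₁ + P₂ + P₃. -/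

import Mathlib

noncomputable section
open Matrix Polynomial

/-- The 4×4 permutation matrix (over ℂ) of the transposition exchanging coordinates `i` and `j`. -/
def permMat (i j : Fin 4) : Matrix (Fin 4) (Fin 4) ℂ :=
  Matrix.of fun k l => if l = Equiv.swap i j k then 1 else 0

/-- `P₁ = P(1,2)`. -/
def P1 : Matrix (Fin 4) (Fin 4) ℂ := permMat 0 1
/-- `P₂ = P(1,3)`. -/
def P2 : Matrix (Fin 4) (Fin 4) ℂ := permMat 0 2
/-- `P₃ = P(1,4)`. -/
def P3 : Matrix (Fin 4) (Fin 4) ℂ := permMat 0 3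

/-- `A(z) = Σ_{k=1}^{3} P_k/(z − z_k)`. -/
def Amat (z₁ z₂ z₃ z : ℂ) : Matrix (Fin 4) (Fin 4) ℂ :=
  (z - z₁)⁻¹ • P1 + (z - z₂)⁻¹ • P2 + (z - z₃)⁻¹ • P3

open Filter Topology in
private lemma lim0' {f : ℂ → ℂ} {w c : ℂ} (hf : Tendsto f (𝓝[≠] w) (𝓝 c))
    (h : ∀ᶠ z in 𝓝[≠] w, f z = 0) : c = 0 :=
  tendsto_nhds_unique hf (tendsto_const_nhds.congr' (h.mono fun _ hz => hz.symm))

open Filter Topology in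
private lemma keyLem (w a b : ℂ) (g : ℂ → ℂ) (hg : ContinuousAt g w)
    (h : ∀ᶠ z in 𝓝[≠] w, a * ((z - w) ^ 2)⁻¹ + b * (z - w)⁻¹ + g z = 0) :
    a = 0 ∧ b = 0 := by
  have hca : ContinuousAt (fun z : ℂ => a + b * (z - w) + (z - w) ^ 2 * g z) w := by
    fun_prop
  have t1 : Tendsto (fun z : ℂ => a + b * (z - w) + (z - w) ^ 2 * g z) (𝓝[≠] w) (𝓝 a) := by
    simpa using hca.tendsto.mono_left (nhdsWithin_le_nhds (s := {w}ᶜ))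
  have e1 : ∀ᶠ z in 𝓝[≠] w, a + b * (z - w) + (z - w) ^ 2 * g z = 0 := by
    filter_upwards [h, self_mem_nhdsWithin] with z hz hzw
    have hzw' : z - w ≠ 0 := sub_ne_zero.mpr hzw
    have e : a + b * (z - w) + (z - w) ^ 2 * g z
        = (z - w) ^ 2 * (a * ((z - w) ^ 2)⁻¹ + b * (z - w)⁻¹ + g z) := by
      field_simp
    rw [e, hz, mul_zero]
  have ha : a = 0 := lim0' t1 e1
  subst ha
  have hcb : ContinuousAt (fun z : ℂ => b + (z - w) * g z) w := by fun_prop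
  have t2 : Tendsto (fun z : ℂ => b + (z - w) * g z) (𝓝[≠] w) (𝓝 b) := by
    simpa using hcb.tendsto.mono_left (nhdsWithin_le_nhds (s := {w}ᶜ))
  have e2 : ∀ᶠ z in 𝓝[≠] w, b + (z - w) * g z = 0 := by
    filter_upwards [h, self_mem_nhdsWithin] with z hz hzw
    have hzw' : z - w ≠ 0 := sub_ne_zero.mpr hzw
    have e : b + (z - w) * g z
        = (z - w) * (0 * ((z - w) ^ 2)⁻¹ + b * (z - w)⁻¹ + g z) := by
      field_simp
      ring
    rw [e, hz, mul_zero]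
  exact ⟨rfl, lim0' t2 e2⟩

open Filter Topology in
private lemma extractLem (w₁ w₂ w₃ : ℂ) (h12 : w₁ ≠ w₂) (h13 : w₁ ≠ w₃) (h23 : w₂ ≠ w₃)
    (a₁ a₂ a₃ b₁ b₂ b₃ d : ℂ)
    (h : ∀ z : ℂ, z ≠ w₁ → z ≠ w₂ → z ≠ w₃ →
      a₁ * ((z - w₁) ^ 2)⁻¹ + a₂ * ((z - w₂) ^ 2)⁻¹ + a₃ * ((z - w₃) ^ 2)⁻¹
      + b₁ * (z - w₁)⁻¹ + b₂ * (z - w₂)⁻¹ + b₃ * (z - w₃)⁻¹ + d = 0) :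
    a₁ = 0 ∧ a₂ = 0 ∧ a₃ = 0 ∧ b₁ = 0 ∧ b₂ = 0 ∧ b₃ = 0 ∧ d = 0 := by
  have cInv2 : ∀ u v : ℂ, u ≠ v → ContinuousAt (fun z : ℂ => ((z - v) ^ 2)⁻¹) u :=
    fun u v hne => ContinuousAt.inv₀ (by fun_prop) (pow_ne_zero 2 (sub_ne_zero.mpr hne))
  have cInv1 : ∀ u v : ℂ, u ≠ v → ContinuousAt (fun z : ℂ => (z - v)⁻¹) u :=
    fun u v hne => ContinuousAt.inv₀ (by fun_prop) (sub_ne_zero.mpr hne)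
  have ev : ∀ u v : ℂ, u ≠ v → ∀ᶠ z in 𝓝[≠] u, z ≠ v := by
    intro u v hne
    exact (eventually_ne_nhds hne).filter_mono nhdsWithin_le_nhds
  have K1 : a₁ = 0 ∧ b₁ = 0 := by
    apply keyLem w₁ a₁ b₁
      (fun z => a₂ * ((z - w₂) ^ 2)⁻¹ + a₃ * ((z - w₃) ^ 2)⁻¹
        + b₂ * (z - w₂)⁻¹ + b₃ * (z - w₃)⁻¹ + d)
    · exact (((((continuousAt_const.mul (cInv2 _ _ h12)).add
        (continuousAt_const.mul (cInv2 _ _ h13))).add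
        (continuousAt_const.mul (cInv1 _ _ h12))).add
        (continuousAt_const.mul (cInv1 _ _ h13))).add continuousAt_const)
    · filter_upwards [ev _ _ h12, ev _ _ h13, self_mem_nhdsWithin] with z hz2 hz3 hz1
      linear_combination h z hz1 hz2 hz3
  have K2 : a₂ = 0 ∧ b₂ = 0 := by
    apply keyLem w₂ a₂ b₂
      (fun z => a₁ * ((z - w₁) ^ 2)⁻¹ + a₃ * ((z - w₃) ^ 2)⁻¹
        + b₁ * (z - w₁)⁻¹ + b₃ * (z - w₃)⁻¹ + d)
    · exact (((((continuousAt_const.mul (cInv2 _ _ h12.symm)).add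
        (continuousAt_const.mul (cInv2 _ _ h23))).add
        (continuousAt_const.mul (cInv1 _ _ h12.symm))).add
        (continuousAt_const.mul (cInv1 _ _ h23))).add continuousAt_const)
    · filter_upwards [ev _ _ h12.symm, ev _ _ h23, self_mem_nhdsWithin] with z hz1 hz3 hz2
      linear_combination h z hz1 hz2 hz3
  have K3 : a₃ = 0 ∧ b₃ = 0 := by
    apply keyLem w₃ a₃ b₃
      (fun z => a₁ * ((z - w₁) ^ 2)⁻¹ + a₂ * ((z - w₂) ^ 2)⁻¹
        + b₁ * (z - w₁)⁻¹ + b₂ * (z - w₂)⁻¹ + d)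
    · exact (((((continuousAt_const.mul (cInv2 _ _ h13.symm)).add
        (continuousAt_const.mul (cInv2 _ _ h23.symm))).add
        (continuousAt_const.mul (cInv1 _ _ h13.symm))).add
        (continuousAt_const.mul (cInv1 _ _ h23.symm))).add continuousAt_const)
    · filter_upwards [ev _ _ h13.symm, ev _ _ h23.symm, self_mem_nhdsWithin] with z hz1 hz2 hz3
      linear_combination h z hz1 hz2 hz3
  obtain ⟨ha1, hb1⟩ := K1
  obtain ⟨ha2, hb2⟩ := K2
  obtain ⟨ha3, hb3⟩ := K3
  refine ⟨ha1, ha2, ha3, hb1, hb2, hb3, ?_⟩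
  have hfin : ({w₁, w₂, w₃} : Set ℂ).Finite :=
    (Set.finite_singleton _).insert _ |>.insert _
  obtain ⟨z₀, hz₀⟩ := hfin.infinite_compl.nonempty
  simp only [Set.mem_compl_iff, Set.mem_insert_iff, Set.mem_singleton_iff, not_or] at hz₀
  have := h z₀ hz₀.1 hz₀.2.1 hz₀.2.2
  simpa [ha1, ha2, ha3, hb1, hb2, hb3] using this

set_option maxHeartbeats 1000000 in
private lemma mainId (z₁ z₂ z₃ : ℂ) (h12 : z₁ ≠ z₂) (h13 : z₁ ≠ z₃) (h23 : z₂ ≠ z₃)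
    (L₁ L₂ L₃ Qm Qz : Fin 4 → ℂ) (z : ℂ) (hz1 : z ≠ z₁) (hz2 : z ≠ z₂) (hz3 : z ≠ z₃) :
    ((-1 / (z - z₁) ^ 2) • L₁ + (-1 / (z - z₂) ^ 2) • L₂ + (-1 / (z - z₃) ^ 2) • L₃
        + (1 : ℂ) • Qm)
      + Amat z₁ z₂ z₃ z *ᵥ
        ((z - z₁)⁻¹ • L₁ + (z - z₂)⁻¹ • L₂ + (z - z₃)⁻¹ • L₃ + z • Qm + Qz)
    = -(((z - z₁) ^ 2)⁻¹ • ((1 - P1) *ᵥ L₁)) + -(((z - z₂) ^ 2)⁻¹ • ((1 - P2) *ᵥ L₂))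
      + -(((z - z₃) ^ 2)⁻¹ • ((1 - P3) *ᵥ L₃))
      + (z - z₁)⁻¹ • ((z₁ - z₂)⁻¹ • (P1 *ᵥ L₂ + P2 *ᵥ L₁)
          + (z₁ - z₃)⁻¹ • (P1 *ᵥ L₃ + P3 *ᵥ L₁) + P1 *ᵥ (z₁ • Qm + Qz))
      + (z - z₂)⁻¹ • ((z₂ - z₁)⁻¹ • (P2 *ᵥ L₁ + P1 *ᵥ L₂)
          + (z₂ - z₃)⁻¹ • (P2 *ᵥ L₃ + P3 *ᵥ L₂) + P2 *ᵥ (z₂ • Qm + Qz))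
      + (z - z₃)⁻¹ • ((z₃ - z₁)⁻¹ • (P3 *ᵥ L₁ + P1 *ᵥ L₃)
          + (z₃ - z₂)⁻¹ • (P3 *ᵥ L₂ + P2 *ᵥ L₃) + P3 *ᵥ (z₃ • Qm + Qz))
      + (Qm + (P1 + P2 + P3) *ᵥ Qm) := by
  have e1 : z - z₁ ≠ 0 := sub_ne_zero.mpr hz1
  have e2 : z - z₂ ≠ 0 := sub_ne_zero.mpr hz2
  have e3 : z - z₃ ≠ 0 := sub_ne_zero.mpr hz3
  have f12 : z₁ - z₂ ≠ 0 := sub_ne_zero.mpr h12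
  have f13 : z₁ - z₃ ≠ 0 := sub_ne_zero.mpr h13
  have f21 : z₂ - z₁ ≠ 0 := sub_ne_zero.mpr h12.symm
  have f23 : z₂ - z₃ ≠ 0 := sub_ne_zero.mpr h23
  have f31 : z₃ - z₁ ≠ 0 := sub_ne_zero.mpr h13.symm
  have f32 : z₃ - z₂ ≠ 0 := sub_ne_zero.mpr h23.symm
  simp only [Amat, Matrix.add_mulVec, Matrix.smul_mulVec, Matrix.mulVec_add,
    Matrix.mulVec_smul, Matrix.sub_mulVec, Matrix.one_mulVec]
  match_scalars
  all_goals field_simp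
  all_goals ring

set_option maxHeartbeats 1000000

/-- for arbitrary vectors `L₁, L₂, L₃, Q₋₁, Q₀ ∈ ℂ⁴`, the function
`W(z) = Σ L_k/(z − z_k) + Q₋₁·z + Q₀` solves `W' = −A·W` on `ℂ ∖ {z₁,z₂,z₃}` iff
conditions (2.10)–(2.12) hold. -/
theorem stmt_7 (z₁ z₂ z₃ : ℂ) (h12 : z₁ ≠ z₂) (h13 : z₁ ≠ z₃) (h23 : z₂ ≠ z₃)
    (L₁ L₂ L₃ Qm Qz : Fin 4 → ℂ) :
    (∀ z : ℂ, z ≠ z₁ → z ≠ z₂ → z ≠ z₃ →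
        HasDerivAt
          (fun w => (w - z₁)⁻¹ • L₁ + (w - z₂)⁻¹ • L₂ + (w - z₃)⁻¹ • L₃ + w • Qm + Qz)
          (-(Amat z₁ z₂ z₃ z *ᵥ
            ((z - z₁)⁻¹ • L₁ + (z - z₂)⁻¹ • L₂ + (z - z₃)⁻¹ • L₃ + z • Qm + Qz))) z)
    ↔
    (((1 - P1) *ᵥ L₁ = 0 ∧ (1 - P2) *ᵥ L₂ = 0 ∧ (1 - P3) *ᵥ L₃ = 0) ∧
     ((z₁ - z₂)⁻¹ • (P1 *ᵥ L₂ + P2 *ᵥ L₁) + (z₁ - z₃)⁻¹ • (P1 *ᵥ L₃ + P3 *ᵥ L₁)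
        + P1 *ᵥ (z₁ • Qm + Qz) = 0 ∧
      (z₂ - z₁)⁻¹ • (P2 *ᵥ L₁ + P1 *ᵥ L₂) + (z₂ - z₃)⁻¹ • (P2 *ᵥ L₃ + P3 *ᵥ L₂)
        + P2 *ᵥ (z₂ • Qm + Qz) = 0 ∧
      (z₃ - z₁)⁻¹ • (P3 *ᵥ L₁ + P1 *ᵥ L₃) + (z₃ - z₂)⁻¹ • (P3 *ᵥ L₂ + P2 *ᵥ L₃)
        + P3 *ᵥ (z₃ • Qm + Qz) = 0) ∧
     Qm = -((P1 + P2 + P3) *ᵥ Qm)) := by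
  -- the actual derivative of W
  have hW : ∀ z : ℂ, z ≠ z₁ → z ≠ z₂ → z ≠ z₃ →
      HasDerivAt
        (fun w => (w - z₁)⁻¹ • L₁ + (w - z₂)⁻¹ • L₂ + (w - z₃)⁻¹ • L₃ + w • Qm + Qz)
        ((-1 / (z - z₁) ^ 2) • L₁ + (-1 / (z - z₂) ^ 2) • L₂ + (-1 / (z - z₃) ^ 2) • L₃
          + (1 : ℂ) • Qm) z := by
    intro z hz1 hz2 hz3
    have d1 : HasDerivAt (fun w : ℂ => (w - z₁)⁻¹) (-1 / (z - z₁) ^ 2) z := by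
      simpa using ((hasDerivAt_id z).sub_const z₁).fun_inv (sub_ne_zero.mpr hz1)
    have d2 : HasDerivAt (fun w : ℂ => (w - z₂)⁻¹) (-1 / (z - z₂) ^ 2) z := by
      simpa using ((hasDerivAt_id z).sub_const z₂).fun_inv (sub_ne_zero.mpr hz2)
    have d3 : HasDerivAt (fun w : ℂ => (w - z₃)⁻¹) (-1 / (z - z₃) ^ 2) z := by
      simpa using ((hasDerivAt_id z).sub_const z₃).fun_inv (sub_ne_zero.mpr hz3)
    exact ((((d1.smul_const L₁).add (d2.smul_const L₂)).add (d3.smul_const L₃)).add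
      ((hasDerivAt_id z).smul_const Qm)).add_const Qz
  -- step A: the ODE holds iff the derivative-value identity holds
  have stepA : (∀ z : ℂ, z ≠ z₁ → z ≠ z₂ → z ≠ z₃ →
      HasDerivAt
        (fun w => (w - z₁)⁻¹ • L₁ + (w - z₂)⁻¹ • L₂ + (w - z₃)⁻¹ • L₃ + w • Qm + Qz)
        (-(Amat z₁ z₂ z₃ z *ᵥ
          ((z - z₁)⁻¹ • L₁ + (z - z₂)⁻¹ • L₂ + (z - z₃)⁻¹ • L₃ + z • Qm + Qz))) z)
      ↔ (∀ z : ℂ, z ≠ z₁ → z ≠ z₂ → z ≠ z₃ →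
        ((-1 / (z - z₁) ^ 2) • L₁ + (-1 / (z - z₂) ^ 2) • L₂ + (-1 / (z - z₃) ^ 2) • L₃
          + (1 : ℂ) • Qm)
        = -(Amat z₁ z₂ z₃ z *ᵥ
          ((z - z₁)⁻¹ • L₁ + (z - z₂)⁻¹ • L₂ + (z - z₃)⁻¹ • L₃ + z • Qm + Qz))) := by
    constructor
    · intro h z hz1 hz2 hz3
      exact (hW z hz1 hz2 hz3).unique (h z hz1 hz2 hz3)
    · intro h z hz1 hz2 hz3
      exact (h z hz1 hz2 hz3) ▸ hW z hz1 hz2 hz3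
  rw [stepA]
  -- step B: rewrite the derivative identity via partial fractions
  have stepB : (∀ z : ℂ, z ≠ z₁ → z ≠ z₂ → z ≠ z₃ →
      ((-1 / (z - z₁) ^ 2) • L₁ + (-1 / (z - z₂) ^ 2) • L₂ + (-1 / (z - z₃) ^ 2) • L₃
        + (1 : ℂ) • Qm)
      = -(Amat z₁ z₂ z₃ z *ᵥ
        ((z - z₁)⁻¹ • L₁ + (z - z₂)⁻¹ • L₂ + (z - z₃)⁻¹ • L₃ + z • Qm + Qz)))
    ↔ (∀ z : ℂ, z ≠ z₁ → z ≠ z₂ → z ≠ z₃ →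
      -(((z - z₁) ^ 2)⁻¹ • ((1 - P1) *ᵥ L₁)) + -(((z - z₂) ^ 2)⁻¹ • ((1 - P2) *ᵥ L₂))
      + -(((z - z₃) ^ 2)⁻¹ • ((1 - P3) *ᵥ L₃))
      + (z - z₁)⁻¹ • ((z₁ - z₂)⁻¹ • (P1 *ᵥ L₂ + P2 *ᵥ L₁)
          + (z₁ - z₃)⁻¹ • (P1 *ᵥ L₃ + P3 *ᵥ L₁) + P1 *ᵥ (z₁ • Qm + Qz))
      + (z - z₂)⁻¹ • ((z₂ - z₁)⁻¹ • (P2 *ᵥ L₁ + P1 *ᵥ L₂)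
          + (z₂ - z₃)⁻¹ • (P2 *ᵥ L₃ + P3 *ᵥ L₂) + P2 *ᵥ (z₂ • Qm + Qz))
      + (z - z₃)⁻¹ • ((z₃ - z₁)⁻¹ • (P3 *ᵥ L₁ + P1 *ᵥ L₃)
          + (z₃ - z₂)⁻¹ • (P3 *ᵥ L₂ + P2 *ᵥ L₃) + P3 *ᵥ (z₃ • Qm + Qz))
      + (Qm + (P1 + P2 + P3) *ᵥ Qm) = 0) := by
    refine forall_congr' fun z => ?_
    refine imp_congr_right fun hz1 => imp_congr_right fun hz2 => imp_congr_right fun hz3 => ?_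
    rw [eq_neg_iff_add_eq_zero, mainId z₁ z₂ z₃ h12 h13 h23 L₁ L₂ L₃ Qm Qz z hz1 hz2 hz3]
  rw [stepB]
  constructor
  · intro h
    have E : ∀ i : Fin 4,
        -(((1 - P1) *ᵥ L₁) i) = 0 ∧ -(((1 - P2) *ᵥ L₂) i) = 0 ∧ -(((1 - P3) *ᵥ L₃) i) = 0 ∧
        ((z₁ - z₂)⁻¹ • (P1 *ᵥ L₂ + P2 *ᵥ L₁) + (z₁ - z₃)⁻¹ • (P1 *ᵥ L₃ + P3 *ᵥ L₁)
          + P1 *ᵥ (z₁ • Qm + Qz)) i = 0 ∧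
        ((z₂ - z₁)⁻¹ • (P2 *ᵥ L₁ + P1 *ᵥ L₂) + (z₂ - z₃)⁻¹ • (P2 *ᵥ L₃ + P3 *ᵥ L₂)
          + P2 *ᵥ (z₂ • Qm + Qz)) i = 0 ∧
        ((z₃ - z₁)⁻¹ • (P3 *ᵥ L₁ + P1 *ᵥ L₃) + (z₃ - z₂)⁻¹ • (P3 *ᵥ L₂ + P2 *ᵥ L₃)
          + P3 *ᵥ (z₃ • Qm + Qz)) i = 0 ∧
        (Qm + (P1 + P2 + P3) *ᵥ Qm) i = 0 := by
      intro i
      apply extractLem z₁ z₂ z₃ h12 h13 h23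
      intro z hz1 hz2 hz3
      have := congrFun (h z hz1 hz2 hz3) i
      simp only [Pi.add_apply, Pi.neg_apply, Pi.smul_apply, smul_eq_mul, Pi.zero_apply]
        at this ⊢
      linear_combination this
    refine ⟨⟨?_, ?_, ?_⟩, ⟨?_, ?_, ?_⟩, ?_⟩
    · exact funext fun i => neg_eq_zero.mp (E i).1
    · exact funext fun i => neg_eq_zero.mp (E i).2.1
    · exact funext fun i => neg_eq_zero.mp (E i).2.2.1
    · exact funext fun i => (E i).2.2.2.1
    · exact funext fun i => (E i).2.2.2.2.1
    · exact funext fun i => (E i).2.2.2.2.2.1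
    · have h0 : Qm + (P1 + P2 + P3) *ᵥ Qm = 0 := funext fun i => (E i).2.2.2.2.2.2
      exact eq_neg_of_add_eq_zero_left h0
  · rintro ⟨⟨hA1, hA2, hA3⟩, ⟨hB1, hB2, hB3⟩, hQ⟩ z hz1 hz2 hz3
    have h0 : Qm + (P1 + P2 + P3) *ᵥ Qm = 0 := by
      exact eq_neg_iff_add_eq_zero.mp hQ
    rw [hA1, hA2, hA3, hB1, hB2, hB3, h0]
    simp
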